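/- Let μ be a probability measure on a measurable space Ω and D : Ω → ℕ a measurable function with 0 < E_μ[D] < ∞. Define the biased measure ν by ν(A) = E_μ[1_A · D] / E_μ[D]. If there exist B₁, B₂ > 0 with μ(D > x) ≤ B₁ exp(−B₂ x) for all x ≥ 0, then there exists a constant C > 0 such that for every measurable set A with ν(A) > 0, μ(A) ≥ C⁻¹ · ν(A) / (− log ν(A) + 1). -/

import Mathlib

open MeasureTheory
open MeasureTheory Set Real

lemma exp_int : ∀ b : ℝ, 0 < b → (∫ x : ℝ in Ioi (0:ℝ), Real.exp (-b * x)) = b⁻¹ := by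
  intro b hb
  have := integral_comp_mul_left_Ioi (fun x => Real.exp (-x)) 0 hb
  simp only [mul_zero, integral_exp_neg_Ioi, neg_zero, Real.exp_zero, smul_eq_mul, mul_one] at this
  calc (∫ x : ℝ in Ioi (0:ℝ), Real.exp (-b * x))
      = ∫ x : ℝ in Ioi (0:ℝ), Real.exp (-(b * x)) := by
        congr 1; ext x; ring_nf
    _ = b⁻¹ := this

lemma tail_bound {Ω : Type*} [MeasurableSpace Ω] (μ : Measure Ω) [IsProbabilityMeasure μ]
    (D : Ω → ℕ) (hDmeas : Measurable D)
    (hint : Integrable (fun ω => (D ω : ℝ)) μ)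
    (B₁ B₂ : ℝ) (hB₁ : 0 < B₁) (hB₂ : 0 < B₂)
    (htail : ∀ x : ℝ, 0 ≤ x → (μ {ω | x < (D ω : ℝ)}).toReal ≤ B₁ * Real.exp (-B₂ * x))
    (N : ℝ) (hN : 0 ≤ N) :
    ∫ ω, max ((D ω : ℝ) - N) 0 ∂μ ≤ (B₁ / B₂) * Real.exp (-B₂ * N) := by
  have hD : Measurable fun ω => (D ω : ℝ) := measurable_from_top.comp hDmeas
  set g : Ω → ℝ := fun ω => max ((D ω : ℝ) - N) 0 with hg_def
  have hg_meas : Measurable g := (hD.sub measurable_const).max measurable_const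
  have hg_nonneg : ∀ ω, 0 ≤ g ω := fun ω => le_max_right _ _
  -- rewrite integral as lintegral
  rw [integral_eq_lintegral_of_nonneg_ae (Filter.Eventually.of_forall hg_nonneg)
    hg_meas.aestronglyMeasurable]
  -- layer cake
  rw [lintegral_eq_lintegral_meas_lt μ (Filter.Eventually.of_forall hg_nonneg)
    hg_meas.aemeasurable]
  have key : (∫⁻ t in Ioi (0:ℝ), μ {a | t < g a}) ≤
      ENNReal.ofReal ((B₁ / B₂) * Real.exp (-B₂ * N)) := by
    have hmono : (∫⁻ t in Ioi (0:ℝ), μ {a | t < g a}) ≤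
        ∫⁻ t in Ioi (0:ℝ), ENNReal.ofReal (B₁ * Real.exp (-B₂ * (N + t))) := by
      apply setLIntegral_mono' measurableSet_Ioi
      intro t ht
      have hsub : {a | t < g a} ⊆ {ω | (N + t) < (D ω : ℝ)} := by
        intro a ha
        simp only [Set.mem_setOf_eq] at ha ⊢
        rcases le_or_gt (g a) 0 with h | h
        · exact absurd (lt_of_lt_of_le ha h) (lt_irrefl _ ∘ fun _ => ht.trans (ha.trans_le h))
        · have : g a = (D a : ℝ) - N := by
            simp only [hg_def, max_eq_left_iff]
            by_contra hc
            push_neg at hc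
            simp [hg_def, max_eq_right hc.le] at h
          linarith [ha, this ▸ ha]
      calc μ {a | t < g a} ≤ μ {ω | (N + t) < (D ω : ℝ)} := measure_mono hsub
        _ ≤ ENNReal.ofReal (B₁ * Real.exp (-B₂ * (N + t))) := by
            rw [← ENNReal.ofReal_toReal (measure_ne_top μ _)]
            exact ENNReal.ofReal_le_ofReal (htail (N + t) (by linarith [(mem_Ioi.mp ht).le]))
    refine hmono.trans ?_
    have hintexp : IntegrableOn (fun t : ℝ => B₁ * Real.exp (-B₂ * (N + t))) (Ioi 0) := by
      have : IntegrableOn (fun t : ℝ => Real.exp (-B₂ * t)) (Ioi 0) :=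
        exp_neg_integrableOn_Ioi 0 hB₂
      have h2 := (this.const_mul (B₁ * Real.exp (-B₂ * N)))
      apply IntegrableOn.congr_fun h2 ?_ measurableSet_Ioi
      intro t _
      dsimp only
      rw [mul_assoc, ← Real.exp_add]
      ring_nf
    rw [← ofReal_integral_eq_lintegral_ofReal hintexp
      (Filter.Eventually.of_forall fun t => by positivity)]
    apply ENNReal.ofReal_le_ofReal
    have : (∫ t in Ioi (0:ℝ), B₁ * Real.exp (-B₂ * (N + t))) =
        (B₁ * Real.exp (-B₂ * N)) * ∫ t in Ioi (0:ℝ), Real.exp (-B₂ * t) := by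
      rw [← integral_const_mul]
      congr 1; ext t
      rw [mul_assoc, ← Real.exp_add]; ring_nf
    rw [this, exp_int B₂ hB₂]
    rw [div_mul_eq_mul_div, mul_comm B₁ (Real.exp (-B₂ * N))]
    rw [mul_assoc, ← div_eq_mul_inv]
    rw [mul_div_assoc]
  calc (∫⁻ t in Ioi (0:ℝ), μ {a | t < g a}).toReal
      ≤ (ENNReal.ofReal ((B₁ / B₂) * Real.exp (-B₂ * N))).toReal :=
        ENNReal.toReal_mono ENNReal.ofReal_ne_top key
    _ = (B₁ / B₂) * Real.exp (-B₂ * N) := ENNReal.toReal_ofReal (by positivity)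


/-- Comparison between a probability measure μ and its degree-biased
version ν(A) = E_μ[1_A D]/E_μ[D] under an exponential tail bound for D:
μ(A) ≥ C⁻¹ ν(A)/(-log ν(A) + 1). -/
theorem stmt_1 {Ω : Type*} [MeasurableSpace Ω] (μ : Measure Ω) [IsProbabilityMeasure μ]
    (D : Ω → ℕ) (hDmeas : Measurable D)
    (hint : Integrable (fun ω => (D ω : ℝ)) μ)
    (hpos : 0 < ∫ ω, (D ω : ℝ) ∂μ)
    (B₁ B₂ : ℝ) (hB₁ : 0 < B₁) (hB₂ : 0 < B₂)
    (htail : ∀ x : ℝ, 0 ≤ x → (μ {ω | x < (D ω : ℝ)}).toReal ≤ B₁ * Real.exp (-B₂ * x)) :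
    ∃ C : ℝ, 0 < C ∧ ∀ A : Set Ω, MeasurableSet A →
      0 < (∫ ω in A, (D ω : ℝ) ∂μ) / (∫ ω, (D ω : ℝ) ∂μ) →
      C⁻¹ * (((∫ ω in A, (D ω : ℝ) ∂μ) / (∫ ω, (D ω : ℝ) ∂μ)) /
          (-Real.log ((∫ ω in A, (D ω : ℝ) ∂μ) / (∫ ω, (D ω : ℝ) ∂μ)) + 1))
        ≤ (μ A).toReal := by
  set m : ℝ := ∫ ω, (D ω : ℝ) ∂μ with hm_def
  set C₃ : ℝ := B₁ / B₂ with hC₃_def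
  have hC₃ : 0 < C₃ := by positivity
  set a' : ℝ := max 0 (Real.log (2 * C₃ / m)) with ha'_def
  have ha'0 : 0 ≤ a' := le_max_left _ _
  refine ⟨2 * (a' + 1) / (B₂ * m), by positivity, ?_⟩
  intro A hA hνpos
  set I : ℝ := ∫ ω in A, (D ω : ℝ) ∂μ with hI_def
  set ν : ℝ := I / m with hν_def
  have hν : 0 < ν := hνpos
  have hI : 0 < I := by
    have : I = ν * m := by rw [hν_def, div_mul_cancel₀ _ hpos.ne']
    rw [this]; exact mul_pos hν hpos
  have hIle : I ≤ m :=
    setIntegral_le_integral hint (Filter.Eventually.of_forall fun ω => Nat.cast_nonneg _)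
  have hν1 : ν ≤ 1 := (div_le_one hpos).mpr hIle
  set L : ℝ := -Real.log ν with hL_def
  have hL0 : 0 ≤ L := by
    rw [hL_def, neg_nonneg]
    exact Real.log_nonpos hν.le hν1
  set N : ℝ := (max 0 (Real.log (2 * C₃ / (m * ν))) + 1) / B₂ with hN_def
  have hN : 0 < N := by positivity
  -- the truncated-excess function
  set g : Ω → ℝ := fun ω => max ((D ω : ℝ) - N) 0 with hg_def
  have hD : Measurable fun ω => (D ω : ℝ) := measurable_from_top.comp hDmeas
  have hg_meas : Measurable g := (hD.sub measurable_const).max measurable_const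
  have hg_nonneg : ∀ ω, 0 ≤ g ω := fun ω => le_max_right _ _
  have hg_int : Integrable g μ := by
    refine hint.mono hg_meas.aestronglyMeasurable (Filter.Eventually.of_forall fun ω => ?_)
    rw [Real.norm_eq_abs, Real.norm_eq_abs, abs_of_nonneg (hg_nonneg ω),
      abs_of_nonneg (Nat.cast_nonneg _)]
    rw [hg_def]
    simp only [max_le_iff]
    constructor
    · linarith [hN.le]
    · positivity
  -- Step A : I ≤ N * μ(A) + ∫ g
  have stepA : I ≤ N * (μ A).toReal + ∫ ω, g ω ∂μ := by
    have h1 : I ≤ ∫ ω in A, (N + g ω) ∂μ := by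
      refine setIntegral_mono_on hint.integrableOn
        (((integrable_const N).add hg_int).integrableOn) hA (fun ω _ => ?_)
      have := le_max_left ((D ω : ℝ) - N) 0
      rw [hg_def]; dsimp only; linarith
    have h2 : (∫ ω in A, (N + g ω) ∂μ) = (μ A).toReal * N + ∫ ω in A, g ω ∂μ := by
      rw [integral_add (integrable_const N).integrableOn hg_int.integrableOn,
        setIntegral_const, smul_eq_mul]
      rfl
    have h3 : (∫ ω in A, g ω ∂μ) ≤ ∫ ω, g ω ∂μ :=
      setIntegral_le_integral hg_int (Filter.Eventually.of_forall hg_nonneg)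
    calc I ≤ ∫ ω in A, (N + g ω) ∂μ := h1
      _ = (μ A).toReal * N + ∫ ω in A, g ω ∂μ := h2
      _ ≤ N * (μ A).toReal + ∫ ω, g ω ∂μ := by rw [mul_comm]; linarith
  -- Step B : ∫ g ≤ m ν / 2
  have hBN : B₂ * N = max 0 (Real.log (2 * C₃ / (m * ν))) + 1 := by
    rw [hN_def, mul_div_cancel₀ _ hB₂.ne']
  have stepB : (∫ ω, g ω ∂μ) ≤ m * ν / 2 := by
    have htb := tail_bound μ D hDmeas hint B₁ B₂ hB₁ hB₂ htail N hN.le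
    have hX : (0:ℝ) < 2 * C₃ / (m * ν) := by positivity
    have hexp : Real.exp (-B₂ * N) ≤ m * ν / (2 * C₃) := by
      have h1 : Real.log (2 * C₃ / (m * ν)) ≤ B₂ * N := by
        rw [hBN]; have := le_max_right (0:ℝ) (Real.log (2 * C₃ / (m * ν))); linarith
      calc Real.exp (-B₂ * N) = (Real.exp (B₂ * N))⁻¹ := by rw [neg_mul, Real.exp_neg]
        _ ≤ (Real.exp (Real.log (2 * C₃ / (m * ν))))⁻¹ := by
            apply inv_anti₀ (Real.exp_pos _) (Real.exp_le_exp.mpr h1)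
        _ = (2 * C₃ / (m * ν))⁻¹ := by rw [Real.exp_log hX]
        _ = m * ν / (2 * C₃) := by rw [inv_div]
    calc (∫ ω, g ω ∂μ) ≤ C₃ * Real.exp (-B₂ * N) := htb
      _ ≤ C₃ * (m * ν / (2 * C₃)) := by
          exact mul_le_mul_of_nonneg_left hexp hC₃.le
      _ = m * ν / 2 := by field_simp
  -- combine : m ν / (2N) ≤ μ(A)
  have hcomb : m * ν / (2 * N) ≤ (μ A).toReal := by
    have hIeq : I = ν * m := by rw [hν_def, div_mul_cancel₀ _ hpos.ne']
    have : m * ν / 2 ≤ N * (μ A).toReal := by nlinarith [stepA, stepB]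
    rw [div_le_iff₀ (by positivity)]
    nlinarith [this]
  -- bound N
  have hBN2 : B₂ * N ≤ (a' + 1) * (L + 1) := by
    have hlog : Real.log (2 * C₃ / (m * ν)) = Real.log (2 * C₃ / m) + L := by
      rw [hL_def]
      rw [show 2 * C₃ / (m * ν) = (2 * C₃ / m) / ν by rw [div_div]]
      rw [Real.log_div (by positivity) hν.ne']
      ring
    have hmax : max 0 (Real.log (2 * C₃ / (m * ν))) ≤ a' + L := by
      rw [hlog, ha'_def]
      rcases le_or_gt (Real.log (2 * C₃ / m) + L) 0 with h | h
      · rw [max_eq_left h]; positivity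
      · rw [max_eq_right h.le]
        have := le_max_right (0:ℝ) (Real.log (2 * C₃ / m))
        linarith
    rw [hBN]
    nlinarith [hmax, ha'0, hL0]
  -- final comparison
  have hfinal : (2 * (a' + 1) / (B₂ * m))⁻¹ * (ν / (L + 1)) ≤ m * ν / (2 * N) := by
    rw [inv_div, div_mul_div_comm]
    rw [div_le_div_iff₀ (by positivity) (by positivity)]
    nlinarith [hBN2, mul_pos hpos hν, mul_nonneg (mul_pos hpos hν).le hL0]
  exact hfinal.trans hcomb
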